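/- For every t > 0, ∫_{ℝⁿ} (∂/∂t) K_{t²/(4s)}(x,y) dx = −(t/(2s)) e^{−α|y|²/(2β)} (2π/β)^{n/2} (|y|²/β² + nα/β), where α = sinh(t²/(2s)) and β = cosh(t²/(2s)); in particular this quantity is nonpositive. -/

import Mathlib

open Real MeasureTheory

/-- The Hermite (Mehler) heat kernel on ℝⁿ. -/
noncomputable def hermiteHeatKernel (n : ℕ) (u : ℝ) (x y : EuclideanSpace ℝ (Fin n)) : ℝ :=
  (Real.sinh (2 * u)) ^ (-(n : ℝ) / 2) *
    Real.exp (-(‖x‖ ^ 2 + ‖y‖ ^ 2) / 2 * (Real.cosh (2 * u) / Real.sinh (2 * u)) +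
      (inner ℝ x y : ℝ) / Real.sinh (2 * u))

section Aux


lemma gauss_integrable_real (n : ℕ) {b : ℝ} (hb : 0 < b) (c : ℝ)
    (w : EuclideanSpace ℝ (Fin n)) :
    Integrable (fun v : EuclideanSpace ℝ (Fin n) =>
      Real.exp (-b * ‖v‖ ^ 2 + c * (inner ℝ w v : ℝ))) := by
  have h := (GaussianFourier.integrable_cexp_neg_mul_sq_norm_add (V := EuclideanSpace ℝ (Fin n))
    (b := (b : ℂ)) (by simpa using hb) (c : ℂ) w).norm
  convert h using 2 with v
  rw [show -(b:ℂ) * (‖v‖:ℂ)^2 + (c:ℂ) * ((inner ℝ w v : ℝ) : ℂ) =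
      ((-b * ‖v‖^2 + c * (inner ℝ w v : ℝ) : ℝ) : ℂ) by push_cast; ring]
  rw [← Complex.ofReal_exp, Complex.norm_real, Real.norm_eq_abs, abs_of_pos (Real.exp_pos _)]

lemma gauss_integral_real (n : ℕ) {b : ℝ} (hb : 0 < b) (c : ℝ)
    (w : EuclideanSpace ℝ (Fin n)) :
    ∫ v : EuclideanSpace ℝ (Fin n), Real.exp (-b * ‖v‖ ^ 2 + c * (inner ℝ w v : ℝ)) =
      (π / b) ^ ((n : ℝ) / 2) * Real.exp (c ^ 2 * ‖w‖ ^ 2 / (4 * b)) := by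
  have h := GaussianFourier.integral_cexp_neg_mul_sq_norm_add (V := EuclideanSpace ℝ (Fin n))
    (b := (b : ℂ)) (by simpa using hb) (c : ℂ) w
  rw [← Complex.ofReal_inj]
  rw [show ((∫ v : EuclideanSpace ℝ (Fin n),
      Real.exp (-b * ‖v‖ ^ 2 + c * (inner ℝ w v : ℝ)) : ℝ) : ℂ) =
      ∫ v : EuclideanSpace ℝ (Fin n),
        Complex.exp (-(b:ℂ) * (‖v‖:ℂ)^2 + (c:ℂ) * ((inner ℝ w v : ℝ) : ℂ)) from ?_]
  · rw [h, finrank_euclideanSpace_fin]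
    rw [show ((n:ℂ)/2 : ℂ) = (((n:ℝ)/2 : ℝ) : ℂ) by push_cast; ring]
    rw [show (π / (b:ℂ)) = ((π / b : ℝ) : ℂ) by push_cast; ring]
    rw [← Complex.ofReal_cpow (by positivity)]
    rw [show ((c:ℂ)^2 * (‖w‖:ℂ)^2 / (4 * (b:ℂ))) = ((c^2*‖w‖^2/(4*b) : ℝ) : ℂ) by
      push_cast; ring]
    rw [← Complex.ofReal_exp]
    push_cast
    ring
  · have : (∫ v : EuclideanSpace ℝ (Fin n),
        Complex.exp (-(b:ℂ) * (‖v‖:ℂ)^2 + (c:ℂ) * ((inner ℝ w v : ℝ) : ℂ))) =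
        ∫ v : EuclideanSpace ℝ (Fin n),
          ((Real.exp (-b * ‖v‖ ^ 2 + c * (inner ℝ w v : ℝ)) : ℝ) : ℂ) := by
      apply integral_congr_ae
      filter_upwards with v
      rw [show -(b:ℂ) * (‖v‖:ℂ)^2 + (c:ℂ) * ((inner ℝ w v : ℝ) : ℂ) =
          ((-b * ‖v‖^2 + c * (inner ℝ w v : ℝ) : ℝ) : ℂ) by push_cast; ring]
      rw [← Complex.ofReal_exp]
    rw [this]; exact integral_ofReal.symm



noncomputable def Kf (n : ℕ) (s : ℝ) (y : EuclideanSpace ℝ (Fin n)) (τ : ℝ)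
    (x : EuclideanSpace ℝ (Fin n)) : ℝ :=
  Real.sinh (τ ^ 2 / (2 * s)) ^ (-(n : ℝ) / 2) *
    Real.exp (-(‖x‖ ^ 2 + ‖y‖ ^ 2) / 2 *
        (Real.cosh (τ ^ 2 / (2 * s)) / Real.sinh (τ ^ 2 / (2 * s))) +
      (inner ℝ x y : ℝ) / Real.sinh (τ ^ 2 / (2 * s)))

noncomputable def Kd (n : ℕ) (s : ℝ) (y : EuclideanSpace ℝ (Fin n)) (τ : ℝ)
    (x : EuclideanSpace ℝ (Fin n)) : ℝ :=
  (τ / s) * Kf n s y τ x *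
    (-(n : ℝ) / 2 * (Real.cosh (τ ^ 2 / (2 * s)) / Real.sinh (τ ^ 2 / (2 * s))) +
      (‖x‖ ^ 2 + ‖y‖ ^ 2) / (2 * Real.sinh (τ ^ 2 / (2 * s)) ^ 2) -
      (inner ℝ x y : ℝ) * Real.cosh (τ ^ 2 / (2 * s)) / Real.sinh (τ ^ 2 / (2 * s)) ^ 2)

lemma Kf_hasDerivAt (n : ℕ) (s : ℝ) (y : EuclideanSpace ℝ (Fin n)) (hs : 0 < s)
    {τ : ℝ} (hτ : 0 < τ) (x : EuclideanSpace ℝ (Fin n)) :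
    HasDerivAt (fun τ => Kf n s y τ x) (Kd n s y τ x) τ := by
  have hapos : 0 < τ ^ 2 / (2 * s) := by positivity
  have hSpos : 0 < Real.sinh (τ ^ 2 / (2 * s)) := Real.sinh_pos_iff.2 hapos
  have hcs : Real.cosh (τ ^ 2 / (2 * s)) ^ 2 - Real.sinh (τ ^ 2 / (2 * s)) ^ 2 = 1 :=
    Real.cosh_sq_sub_sinh_sq _
  have ha : HasDerivAt (fun τ : ℝ => τ ^ 2 / (2 * s)) (τ / s) τ := by
    have := (hasDerivAt_pow 2 τ).div_const (2 * s)
    refine this.congr_deriv (Eq.symm ?_)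
    field_simp; ring
  have hS : HasDerivAt (fun τ : ℝ => Real.sinh (τ ^ 2 / (2 * s)))
      (Real.cosh (τ ^ 2 / (2 * s)) * (τ / s)) τ := ha.sinh
  have hC : HasDerivAt (fun τ : ℝ => Real.cosh (τ ^ 2 / (2 * s)))
      (Real.sinh (τ ^ 2 / (2 * s)) * (τ / s)) τ := ha.cosh
  have h1 : HasDerivAt (fun τ : ℝ => Real.sinh (τ ^ 2 / (2 * s)) ^ (-(n : ℝ) / 2))
      ((Real.cosh (τ ^ 2 / (2 * s)) * (τ / s)) * (-(n : ℝ) / 2) *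
        Real.sinh (τ ^ 2 / (2 * s)) ^ (-(n : ℝ) / 2 - 1)) τ :=
    hS.rpow_const (Or.inl hSpos.ne')
  have hX : HasDerivAt (fun τ : ℝ => -(‖x‖ ^ 2 + ‖y‖ ^ 2) / 2 *
      (Real.cosh (τ ^ 2 / (2 * s)) / Real.sinh (τ ^ 2 / (2 * s))))
      (-(‖x‖ ^ 2 + ‖y‖ ^ 2) / 2 * (-(τ / s) / Real.sinh (τ ^ 2 / (2 * s)) ^ 2)) τ := by
    have h := (hC.div hS hSpos.ne').const_mul (-(‖x‖ ^ 2 + ‖y‖ ^ 2) / 2)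
    refine h.congr_deriv (Eq.symm ?_)
    field_simp
    linear_combination (-(‖x‖ ^ 2 + ‖y‖ ^ 2)) * hcs
  have hI : HasDerivAt (fun τ : ℝ => (inner ℝ x y : ℝ) / Real.sinh (τ ^ 2 / (2 * s)))
      (-((inner ℝ x y : ℝ) * (Real.cosh (τ ^ 2 / (2 * s)) * (τ / s))) /
        Real.sinh (τ ^ 2 / (2 * s)) ^ 2) τ := by
    have h := (hasDerivAt_const τ ((inner ℝ x y : ℝ))).div hS hSpos.ne'
    refine h.congr_deriv (Eq.symm ?_)
    ring
  have hE := (hX.add hI).exp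
  have hfin := h1.mul hE
  refine hfin.congr_deriv (Eq.symm ?_)
  simp only [Pi.add_apply]
  unfold Kd Kf
  rw [Real.rpow_sub_one hSpos.ne']
  generalize Real.sinh (τ ^ 2 / (2 * s)) = S at hSpos ⊢
  generalize Real.cosh (τ ^ 2 / (2 * s)) = C
  generalize Real.exp _ = E
  field_simp
  ring

section
variable (n : ℕ) (s : ℝ) (y : EuclideanSpace ℝ (Fin n))

lemma Kf_rewrite (hs : 0 < s) {τ : ℝ} (hτ : 0 < τ) :
    (fun x => Kf n s y τ x) = fun x =>
      (Real.sinh (τ ^ 2 / (2 * s)) ^ (-(n : ℝ) / 2) *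
        Real.exp (-‖y‖ ^ 2 * Real.cosh (τ ^ 2 / (2 * s)) /
          (2 * Real.sinh (τ ^ 2 / (2 * s))))) *
      Real.exp (-(Real.cosh (τ ^ 2 / (2 * s)) / (2 * Real.sinh (τ ^ 2 / (2 * s)))) * ‖x‖ ^ 2 +
        (1 / Real.sinh (τ ^ 2 / (2 * s))) * (inner ℝ y x : ℝ)) := by
  have hapos : 0 < τ ^ 2 / (2 * s) := by positivity
  have hSpos : 0 < Real.sinh (τ ^ 2 / (2 * s)) := Real.sinh_pos_iff.2 hapos
  funext x
  unfold Kf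
  rw [mul_assoc, ← Real.exp_add]
  congr 1
  rw [real_inner_comm y x]
  field_simp
  ring

lemma Kf_integrable (hs : 0 < s) {τ : ℝ} (hτ : 0 < τ) :
    Integrable (fun x => Kf n s y τ x) := by
  have hapos : 0 < τ ^ 2 / (2 * s) := by positivity
  have hSpos : 0 < Real.sinh (τ ^ 2 / (2 * s)) := Real.sinh_pos_iff.2 hapos
  have hCpos : 0 < Real.cosh (τ ^ 2 / (2 * s)) := Real.cosh_pos _
  rw [Kf_rewrite n s y hs hτ]
  exact (gauss_integrable_real n (by positivity) _ y).const_mul _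

lemma Kf_integral (hs : 0 < s) {τ : ℝ} (hτ : 0 < τ) :
    ∫ x, Kf n s y τ x =
      (2 * π / Real.cosh (τ ^ 2 / (2 * s))) ^ ((n : ℝ) / 2) *
        Real.exp (-Real.sinh (τ ^ 2 / (2 * s)) * ‖y‖ ^ 2 /
          (2 * Real.cosh (τ ^ 2 / (2 * s)))) := by
  have hapos : 0 < τ ^ 2 / (2 * s) := by positivity
  have hSpos : 0 < Real.sinh (τ ^ 2 / (2 * s)) := Real.sinh_pos_iff.2 hapos
  have hCpos : 0 < Real.cosh (τ ^ 2 / (2 * s)) := Real.cosh_pos _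
  have hcs : Real.cosh (τ ^ 2 / (2 * s)) ^ 2 - Real.sinh (τ ^ 2 / (2 * s)) ^ 2 = 1 :=
    Real.cosh_sq_sub_sinh_sq _
  rw [Kf_rewrite n s y hs hτ]
  rw [integral_const_mul]
  rw [gauss_integral_real n (b := Real.cosh (τ ^ 2 / (2 * s)) / (2 * Real.sinh (τ ^ 2 / (2 * s))))
    (by positivity) _ y]
  rw [show π / (Real.cosh (τ ^ 2 / (2 * s)) / (2 * Real.sinh (τ ^ 2 / (2 * s)))) =
      (2 * π / Real.cosh (τ ^ 2 / (2 * s))) * Real.sinh (τ ^ 2 / (2 * s)) by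
    field_simp]
  rw [Real.mul_rpow (by positivity) hSpos.le]
  have h2 : Real.sinh (τ ^ 2 / (2 * s)) ^ (-(n : ℝ) / 2) *
      Real.sinh (τ ^ 2 / (2 * s)) ^ ((n : ℝ) / 2) = 1 := by
    rw [← Real.rpow_add hSpos, show (-(n:ℝ)/2 + (n:ℝ)/2) = 0 by ring, Real.rpow_zero]
  rw [show ∀ A B P Q R : ℝ, (A * B) * ((P * Q) * R) = P * ((A * Q) * (B * R)) from
    fun _ _ _ _ _ => by ring]
  rw [h2, one_mul, ← Real.exp_add]
  congr 2
  field_simp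
  linear_combination (-4 * ‖y‖ ^ 2) * hcs
end


lemma F_hasDerivAt (n : ℕ) (s : ℝ) (yn : ℝ) (hyn : 0 ≤ yn) (hs : 0 < s) {t : ℝ} (ht : 0 < t) :
    HasDerivAt (fun τ : ℝ => (2 * π / Real.cosh (τ ^ 2 / (2 * s))) ^ ((n : ℝ) / 2) *
        Real.exp (-Real.sinh (τ ^ 2 / (2 * s)) * yn / (2 * Real.cosh (τ ^ 2 / (2 * s)))))
      (-(t / (2 * s)) *
        Real.exp (-Real.sinh (t ^ 2 / (2 * s)) * yn / (2 * Real.cosh (t ^ 2 / (2 * s)))) *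
        (2 * π / Real.cosh (t ^ 2 / (2 * s))) ^ ((n : ℝ) / 2) *
        (yn / Real.cosh (t ^ 2 / (2 * s)) ^ 2 +
          n * Real.sinh (t ^ 2 / (2 * s)) / Real.cosh (t ^ 2 / (2 * s)))) t := by
  have hapos : 0 < t ^ 2 / (2 * s) := by positivity
  have hSpos : 0 < Real.sinh (t ^ 2 / (2 * s)) := Real.sinh_pos_iff.2 hapos
  have hCpos : 0 < Real.cosh (t ^ 2 / (2 * s)) := Real.cosh_pos _
  have hBpos : 0 < 2 * π / Real.cosh (t ^ 2 / (2 * s)) := by positivity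
  have hcs : Real.cosh (t ^ 2 / (2 * s)) ^ 2 - Real.sinh (t ^ 2 / (2 * s)) ^ 2 = 1 :=
    Real.cosh_sq_sub_sinh_sq _
  have ha : HasDerivAt (fun τ : ℝ => τ ^ 2 / (2 * s)) (t / s) t := by
    have := (hasDerivAt_pow 2 t).div_const (2 * s)
    refine this.congr_deriv (Eq.symm ?_)
    field_simp; ring
  have hS : HasDerivAt (fun τ : ℝ => Real.sinh (τ ^ 2 / (2 * s)))
      (Real.cosh (t ^ 2 / (2 * s)) * (t / s)) t := ha.sinh
  have hC : HasDerivAt (fun τ : ℝ => Real.cosh (τ ^ 2 / (2 * s)))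
      (Real.sinh (t ^ 2 / (2 * s)) * (t / s)) t := ha.cosh
  have h1 : HasDerivAt (fun τ : ℝ => (2 * π / Real.cosh (τ ^ 2 / (2 * s))) ^ ((n : ℝ) / 2))
      (((0 * Real.cosh (t ^ 2 / (2 * s)) - 2 * π * (Real.sinh (t ^ 2 / (2 * s)) * (t / s))) /
          Real.cosh (t ^ 2 / (2 * s)) ^ 2) * ((n : ℝ) / 2) *
        (2 * π / Real.cosh (t ^ 2 / (2 * s))) ^ ((n : ℝ) / 2 - 1)) t :=
    (((hasDerivAt_const t (2 * π)).div hC hCpos.ne')).rpow_const (Or.inl hBpos.ne')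
  have hnum : HasDerivAt (fun τ : ℝ => -Real.sinh (τ ^ 2 / (2 * s)) * yn)
      (-(Real.cosh (t ^ 2 / (2 * s)) * (t / s)) * yn) t := hS.neg.mul_const _
  have hden : HasDerivAt (fun τ : ℝ => 2 * Real.cosh (τ ^ 2 / (2 * s)))
      (2 * (Real.sinh (t ^ 2 / (2 * s)) * (t / s))) t := hC.const_mul _
  have h2 := ((hnum.div hden (by positivity)).exp)
  have hfin := h1.mul h2
  refine hfin.congr_deriv (Eq.symm ?_)
  simp only [Pi.div_apply]
  rw [Real.rpow_sub_one hBpos.ne']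
  generalize Real.sinh (t ^ 2 / (2 * s)) = S at hSpos hcs ⊢
  generalize Real.cosh (t ^ 2 / (2 * s)) = C at hCpos hcs ⊢
  generalize (2 * π / C) ^ ((n : ℝ) / 2) = B
  generalize Real.exp _ = E
  have hπ : (0:ℝ) < π := Real.pi_pos
  field_simp
  ring_nf
  linear_combination (2 * t * E * B * yn * π) * hcs

/-- the dominating function -/
noncomputable def Kbound (n : ℕ) (s t : ℝ) (y : EuclideanSpace ℝ (Fin n))
    (x : EuclideanSpace ℝ (Fin n)) : ℝ :=
  (3 * t / (2 * s)) * (Real.sinh (t ^ 2 / (8 * s)) ^ (-(n : ℝ) / 2) *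
    Real.exp (-‖x‖ ^ 2 / (2 * Real.sinh (9 * t ^ 2 / (8 * s))) +
      ‖y‖ / Real.sinh (t ^ 2 / (8 * s)) * ‖x‖)) *
    ((n : ℝ) / 2 * (Real.cosh (9 * t ^ 2 / (8 * s)) / Real.sinh (t ^ 2 / (8 * s))) +
      (‖x‖ ^ 2 + ‖y‖ ^ 2) / (2 * Real.sinh (t ^ 2 / (8 * s)) ^ 2) +
      ‖x‖ * ‖y‖ * Real.cosh (9 * t ^ 2 / (8 * s)) / Real.sinh (t ^ 2 / (8 * s)) ^ 2)

lemma Kd_le_bound (n : ℕ) (s t : ℝ) (y : EuclideanSpace ℝ (Fin n)) (hs : 0 < s) (ht : 0 < t)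
    (x : EuclideanSpace ℝ (Fin n)) {τ : ℝ} (hτ : τ ∈ Metric.ball t (t / 2)) :
    ‖Kd n s y τ x‖ ≤ Kbound n s t y x := by
  rw [Metric.mem_ball, Real.dist_eq, abs_sub_lt_iff] at hτ
  obtain ⟨h1, h2⟩ := hτ
  have hτ1 : t / 2 < τ := by linarith
  have hτ2 : τ < 3 * t / 2 := by linarith
  have hτpos : 0 < τ := by linarith
  have hq0 : t ^ 2 ≤ 4 * τ ^ 2 := by nlinarith [mul_pos ht hτpos]
  have hq1 : 4 * τ ^ 2 ≤ 9 * t ^ 2 := by nlinarith [mul_pos ht hτpos]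
  have ha0 : t ^ 2 / (8 * s) ≤ τ ^ 2 / (2 * s) := by
    rw [div_le_div_iff₀ (by positivity) (by positivity)]
    nlinarith [mul_le_mul_of_nonneg_right hq0 hs.le]
  have ha1 : τ ^ 2 / (2 * s) ≤ 9 * t ^ 2 / (8 * s) := by
    rw [div_le_div_iff₀ (by positivity) (by positivity)]
    nlinarith [mul_le_mul_of_nonneg_right hq1 hs.le]
  set a := τ ^ 2 / (2 * s) with hadef
  have hapos : 0 < a := by positivity
  have hS0pos : 0 < Real.sinh (t ^ 2 / (8 * s)) := Real.sinh_pos_iff.2 (by positivity)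
  have hSpos : 0 < Real.sinh a := Real.sinh_pos_iff.2 hapos
  have hS0le : Real.sinh (t ^ 2 / (8 * s)) ≤ Real.sinh a := Real.sinh_le_sinh.2 ha0
  have hSle : Real.sinh a ≤ Real.sinh (9 * t ^ 2 / (8 * s)) := Real.sinh_le_sinh.2 ha1
  have hS1pos : 0 < Real.sinh (9 * t ^ 2 / (8 * s)) := lt_of_lt_of_le hSpos hSle
  have hCpos : 0 < Real.cosh a := Real.cosh_pos _
  have hC1 : 1 ≤ Real.cosh a := Real.one_le_cosh _
  have hCle : Real.cosh a ≤ Real.cosh (9 * t ^ 2 / (8 * s)) := by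
    rw [Real.cosh_le_cosh]
    rw [abs_of_pos hapos, abs_of_pos (by positivity)]
    exact ha1
  have hC1pos : 0 < Real.cosh (9 * t ^ 2 / (8 * s)) := Real.cosh_pos _
  have hIabs : |(inner ℝ x y : ℝ)| ≤ ‖x‖ * ‖y‖ := abs_real_inner_le_norm x y
  -- bound on |τ/s|
  have hb1 : |τ / s| ≤ 3 * t / (2 * s) := by
    rw [abs_of_pos (by positivity), div_le_div_iff₀ (by positivity) (by positivity)]
    nlinarith
  -- bound on Kf
  have hb2 : |Kf n s y τ x| ≤ Real.sinh (t ^ 2 / (8 * s)) ^ (-(n : ℝ) / 2) *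
      Real.exp (-‖x‖ ^ 2 / (2 * Real.sinh (9 * t ^ 2 / (8 * s))) +
        ‖y‖ / Real.sinh (t ^ 2 / (8 * s)) * ‖x‖) := by
    unfold Kf
    rw [abs_of_nonneg (by positivity)]
    apply mul_le_mul
    · exact Real.rpow_le_rpow_of_nonpos hS0pos hS0le (by rw [neg_div]; exact neg_nonpos.2 (by positivity))
    · rw [Real.exp_le_exp]
      have e1 : (inner ℝ x y : ℝ) / Real.sinh a ≤ ‖y‖ / Real.sinh (t ^ 2 / (8 * s)) * ‖x‖ := by
        calc (inner ℝ x y : ℝ) / Real.sinh a ≤ |(inner ℝ x y : ℝ)| / Real.sinh a := by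
              gcongr; exact le_abs_self _
        _ ≤ (‖x‖ * ‖y‖) / Real.sinh (t ^ 2 / (8 * s)) := by gcongr
        _ = ‖y‖ / Real.sinh (t ^ 2 / (8 * s)) * ‖x‖ := by ring
      have e2 : -(‖x‖ ^ 2 + ‖y‖ ^ 2) / 2 * (Real.cosh a / Real.sinh a) ≤
          -‖x‖ ^ 2 / (2 * Real.sinh (9 * t ^ 2 / (8 * s))) := by
        have key : ‖x‖ ^ 2 / (2 * Real.sinh (9 * t ^ 2 / (8 * s))) ≤
            (‖x‖ ^ 2 + ‖y‖ ^ 2) / 2 * (Real.cosh a / Real.sinh a) := by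
          have h3 : 1 / Real.sinh (9 * t ^ 2 / (8 * s)) ≤ Real.cosh a / Real.sinh a := by
            rw [div_le_div_iff₀ hS1pos hSpos]
            simpa using mul_le_mul hC1 hSle hSpos.le hCpos.le
          calc ‖x‖ ^ 2 / (2 * Real.sinh (9 * t ^ 2 / (8 * s)))
              = ‖x‖ ^ 2 / 2 * (1 / Real.sinh (9 * t ^ 2 / (8 * s))) := by ring
          _ ≤ (‖x‖ ^ 2 + ‖y‖ ^ 2) / 2 * (Real.cosh a / Real.sinh a) := by
              apply mul_le_mul ?_ h3 (by positivity) (by positivity)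
              nlinarith [sq_nonneg ‖y‖]
        have h4 := neg_le_neg key
        calc -(‖x‖ ^ 2 + ‖y‖ ^ 2) / 2 * (Real.cosh a / Real.sinh a)
            = -((‖x‖ ^ 2 + ‖y‖ ^ 2) / 2 * (Real.cosh a / Real.sinh a)) := by ring
        _ ≤ -(‖x‖ ^ 2 / (2 * Real.sinh (9 * t ^ 2 / (8 * s)))) := h4
        _ = -‖x‖ ^ 2 / (2 * Real.sinh (9 * t ^ 2 / (8 * s))) := by ring
      exact add_le_add e2 e1
    · positivity
    · positivity
  -- bound on Q
  have hb3 : |(-(n : ℝ) / 2 * (Real.cosh a / Real.sinh a) +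
      (‖x‖ ^ 2 + ‖y‖ ^ 2) / (2 * Real.sinh a ^ 2) -
      (inner ℝ x y : ℝ) * Real.cosh a / Real.sinh a ^ 2)| ≤
      ((n : ℝ) / 2 * (Real.cosh (9 * t ^ 2 / (8 * s)) / Real.sinh (t ^ 2 / (8 * s))) +
        (‖x‖ ^ 2 + ‖y‖ ^ 2) / (2 * Real.sinh (t ^ 2 / (8 * s)) ^ 2) +
        ‖x‖ * ‖y‖ * Real.cosh (9 * t ^ 2 / (8 * s)) / Real.sinh (t ^ 2 / (8 * s)) ^ 2) := by
    have t1 : |(-(n : ℝ) / 2 * (Real.cosh a / Real.sinh a))| ≤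
        (n : ℝ) / 2 * (Real.cosh (9 * t ^ 2 / (8 * s)) / Real.sinh (t ^ 2 / (8 * s))) := by
      rw [abs_mul, abs_div, abs_neg, abs_of_nonneg (Nat.cast_nonneg n), abs_of_pos (by norm_num : (0:ℝ) < 2), abs_of_pos (by positivity : (0:ℝ) < Real.cosh a / Real.sinh a)]
      gcongr
    have t2 : |(‖x‖ ^ 2 + ‖y‖ ^ 2) / (2 * Real.sinh a ^ 2)| ≤
        (‖x‖ ^ 2 + ‖y‖ ^ 2) / (2 * Real.sinh (t ^ 2 / (8 * s)) ^ 2) := by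
      rw [abs_of_nonneg (by positivity)]
      gcongr
    have t3 : |(inner ℝ x y : ℝ) * Real.cosh a / Real.sinh a ^ 2| ≤
        ‖x‖ * ‖y‖ * Real.cosh (9 * t ^ 2 / (8 * s)) / Real.sinh (t ^ 2 / (8 * s)) ^ 2 := by
      rw [abs_div, abs_mul, abs_of_pos hCpos, abs_of_pos (by positivity : (0:ℝ) < Real.sinh a ^ 2)]
      gcongr
    calc |(-(n : ℝ) / 2 * (Real.cosh a / Real.sinh a) +
        (‖x‖ ^ 2 + ‖y‖ ^ 2) / (2 * Real.sinh a ^ 2) -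
        (inner ℝ x y : ℝ) * Real.cosh a / Real.sinh a ^ 2)| ≤
        |(-(n : ℝ) / 2 * (Real.cosh a / Real.sinh a))| +
          |(‖x‖ ^ 2 + ‖y‖ ^ 2) / (2 * Real.sinh a ^ 2)| +
          |(inner ℝ x y : ℝ) * Real.cosh a / Real.sinh a ^ 2| := by
          apply (abs_sub _ _).trans
          gcongr
          exact abs_add_le _ _
    _ ≤ _ := by gcongr
  unfold Kd Kbound
  rw [Real.norm_eq_abs, abs_mul, abs_mul]
  apply mul_le_mul
  · apply mul_le_mul hb1 hb2 (abs_nonneg _) (by positivity)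
  · exact hb3
  · exact abs_nonneg _
  · positivity


lemma gauss_decay {α β P0 P1 P2 : ℝ} (hα : 0 < α) (hβ : 0 ≤ β)
    (hP0 : 0 ≤ P0) (hP1 : 0 ≤ P1) (hP2 : 0 ≤ P2) :
    ∀ r : ℝ, 0 ≤ r → (P0 + P1 * r + P2 * r ^ 2) * Real.exp (-α * r ^ 2 + β * r) ≤
      (Real.exp (β ^ 2 / α) * ((P0 + P1) + 4 * (P1 + P2) / α)) * Real.exp (-(α / 2) * r ^ 2) := by
  intro r hr
  have h1 : β * r ≤ α / 4 * r ^ 2 + β ^ 2 / α := by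
    have key : (β * r - α / 4 * r ^ 2) * α ≤ β ^ 2 := by nlinarith [sq_nonneg (α * r - 2 * β)]
    have := (le_div_iff₀ hα).2 key
    linarith
  have h2 : r ^ 2 ≤ 4 / α * Real.exp (α / 4 * r ^ 2) := by
    have h0 : α / 4 * r ^ 2 ≤ Real.exp (α / 4 * r ^ 2) := by
      linarith [Real.add_one_le_exp (α / 4 * r ^ 2)]
    calc r ^ 2 = 4 / α * (α / 4 * r ^ 2) := by field_simp
    _ ≤ 4 / α * Real.exp (α / 4 * r ^ 2) :=
        mul_le_mul_of_nonneg_left h0 (by positivity)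
  have hpoly : P0 + P1 * r + P2 * r ^ 2 ≤ (P0 + P1) + (P1 + P2) * r ^ 2 := by
    nlinarith [mul_nonneg hP1 (sq_nonneg (r - 1)), mul_nonneg hP1 hr]
  calc (P0 + P1 * r + P2 * r ^ 2) * Real.exp (-α * r ^ 2 + β * r)
      ≤ ((P0 + P1) + (P1 + P2) * r ^ 2) *
        (Real.exp (β ^ 2 / α) * Real.exp (-α * r ^ 2 + α / 4 * r ^ 2)) := by
        rw [← Real.exp_add]
        apply mul_le_mul hpoly (Real.exp_le_exp.2 (by linarith)) (Real.exp_pos _).le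
          (by positivity)
  _ = (P0 + P1) * (Real.exp (β ^ 2 / α) * Real.exp (-(3 * α / 4) * r ^ 2)) +
      (P1 + P2) * r ^ 2 * (Real.exp (β ^ 2 / α) * Real.exp (-(3 * α / 4) * r ^ 2)) := by
        rw [show -α * r ^ 2 + α / 4 * r ^ 2 = -(3 * α / 4) * r ^ 2 by ring]; ring
  _ ≤ (P0 + P1) * (Real.exp (β ^ 2 / α) * Real.exp (-(α / 2) * r ^ 2)) +
      ((P1 + P2) * (4 / α * Real.exp (α / 4 * r ^ 2))) *
        (Real.exp (β ^ 2 / α) * Real.exp (-(3 * α / 4) * r ^ 2)) := by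
        apply add_le_add
        · apply mul_le_mul_of_nonneg_left _ (by positivity)
          apply mul_le_mul_of_nonneg_left _ (Real.exp_pos _).le
          apply Real.exp_le_exp.2
          nlinarith [mul_nonneg hα.le (sq_nonneg r)]
        · exact mul_le_mul_of_nonneg_right
            (mul_le_mul_of_nonneg_left h2 (by positivity)) (by positivity)
  _ = (Real.exp (β ^ 2 / α) * ((P0 + P1) + 4 * (P1 + P2) / α)) * Real.exp (-(α / 2) * r ^ 2) := by
        have hE : Real.exp (α/4*r^2) * Real.exp (-(3*α/4)*r^2) = Real.exp (-(α/2)*r^2) := by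
          rw [← Real.exp_add]; congr 1; ring
        rw [show (P1+P2)*(4/α*Real.exp (α/4*r^2))*(Real.exp (β^2/α)*Real.exp (-(3*α/4)*r^2)) =
          4*(P1+P2)/α * (Real.exp (β^2/α) *
            (Real.exp (α/4*r^2)*Real.exp (-(3*α/4)*r^2))) by ring, hE]
        ring

lemma Kbound_integrable (n : ℕ) (s t : ℝ) (y : EuclideanSpace ℝ (Fin n))
    (hs : 0 < s) (ht : 0 < t) : Integrable (Kbound n s t y) := by
  have hS0pos : 0 < Real.sinh (t ^ 2 / (8 * s)) := Real.sinh_pos_iff.2 (by positivity)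
  have hS1pos : 0 < Real.sinh (9 * t ^ 2 / (8 * s)) := Real.sinh_pos_iff.2 (by positivity)
  have hC1pos : 0 < Real.cosh (9 * t ^ 2 / (8 * s)) := Real.cosh_pos _
  set α : ℝ := 1 / (2 * Real.sinh (9 * t ^ 2 / (8 * s))) with hα_def
  have hαpos : 0 < α := by positivity
  set β : ℝ := ‖y‖ / Real.sinh (t ^ 2 / (8 * s)) with hβ_def
  have hβ0 : 0 ≤ β := by positivity
  set c : ℝ := (3 * t / (2 * s)) * Real.sinh (t ^ 2 / (8 * s)) ^ (-(n : ℝ) / 2) with hc_def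
  have hc0 : 0 ≤ c := by
    apply mul_nonneg _ (by positivity)
    apply div_nonneg (by linarith) (by linarith)
  set P0 : ℝ := c * ((n : ℝ) / 2 * (Real.cosh (9 * t ^ 2 / (8 * s)) /
      Real.sinh (t ^ 2 / (8 * s))) + ‖y‖ ^ 2 / (2 * Real.sinh (t ^ 2 / (8 * s)) ^ 2)) with hP0_def
  set P1 : ℝ := c * (‖y‖ * Real.cosh (9 * t ^ 2 / (8 * s)) /
      Real.sinh (t ^ 2 / (8 * s)) ^ 2) with hP1_def
  set P2 : ℝ := c * (1 / (2 * Real.sinh (t ^ 2 / (8 * s)) ^ 2)) with hP2_def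
  have hP0 : 0 ≤ P0 := by apply mul_nonneg hc0; positivity
  have hP1 : 0 ≤ P1 := by apply mul_nonneg hc0; positivity
  have hP2 : 0 ≤ P2 := by apply mul_nonneg hc0; positivity
  have hrw : ∀ x : EuclideanSpace ℝ (Fin n), Kbound n s t y x =
      (P0 + P1 * ‖x‖ + P2 * ‖x‖ ^ 2) * Real.exp (-α * ‖x‖ ^ 2 + β * ‖x‖) := by
    intro x
    unfold Kbound
    rw [hP0_def, hP1_def, hP2_def, hc_def, hα_def, hβ_def]
    rw [show -(1 / (2 * Real.sinh (9 * t ^ 2 / (8 * s)))) * ‖x‖ ^ 2 +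
        ‖y‖ / Real.sinh (t ^ 2 / (8 * s)) * ‖x‖ =
        -‖x‖ ^ 2 / (2 * Real.sinh (9 * t ^ 2 / (8 * s))) +
        ‖y‖ / Real.sinh (t ^ 2 / (8 * s)) * ‖x‖ by ring]
    ring
  set M : ℝ := Real.exp (β ^ 2 / α) * ((P0 + P1) + 4 * (P1 + P2) / α) with hM_def
  have hgint : Integrable (fun x : EuclideanSpace ℝ (Fin n) =>
      M * Real.exp (-(α / 2) * ‖x‖ ^ 2)) := by
    have := (gauss_integrable_real n (show 0 < α / 2 by positivity) 0
      (0 : EuclideanSpace ℝ (Fin n))).const_mul M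
    simpa using this
  apply hgint.mono'
  · apply Continuous.aestronglyMeasurable
    unfold Kbound
    fun_prop
  · filter_upwards with x
    rw [Real.norm_eq_abs, abs_of_nonneg, hrw x]
    · exact gauss_decay hαpos hβ0 hP0 hP1 hP2 ‖x‖ (norm_nonneg x)
    · rw [hrw x]; positivity

end Aux

theorem stmt_12 (n : ℕ) (s t : ℝ) (hs : 0 < s) (ht : 0 < t)
    (y : EuclideanSpace ℝ (Fin n)) :
    (∫ x, deriv (fun τ : ℝ => hermiteHeatKernel n (τ ^ 2 / (4 * s)) x y) t) =
        -(t / (2 * s)) *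
          Real.exp (-Real.sinh (t ^ 2 / (2 * s)) * ‖y‖ ^ 2 /
            (2 * Real.cosh (t ^ 2 / (2 * s)))) *
          (2 * π / Real.cosh (t ^ 2 / (2 * s))) ^ ((n : ℝ) / 2) *
          (‖y‖ ^ 2 / Real.cosh (t ^ 2 / (2 * s)) ^ 2 +
            n * Real.sinh (t ^ 2 / (2 * s)) / Real.cosh (t ^ 2 / (2 * s))) ∧
      (∫ x, deriv (fun τ : ℝ => hermiteHeatKernel n (τ ^ 2 / (4 * s)) x y) t) ≤ 0 := by
  have hSpos : 0 < Real.sinh (t ^ 2 / (2 * s)) := Real.sinh_pos_iff.2 (by positivity)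
  have hCpos : 0 < Real.cosh (t ^ 2 / (2 * s)) := Real.cosh_pos _
  -- the parametrized kernel agrees with Kf
  have hfun : ∀ x : EuclideanSpace ℝ (Fin n),
      (fun τ : ℝ => hermiteHeatKernel n (τ ^ 2 / (4 * s)) x y) = fun τ => Kf n s y τ x := by
    intro x; funext τ
    unfold hermiteHeatKernel Kf
    rw [show 2 * (τ ^ 2 / (4 * s)) = τ ^ 2 / (2 * s) by ring]
  have hderiv : ∀ x : EuclideanSpace ℝ (Fin n),
      deriv (fun τ : ℝ => hermiteHeatKernel n (τ ^ 2 / (4 * s)) x y) t = Kd n s y t x := by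
    intro x; rw [hfun x]; exact (Kf_hasDerivAt n s y hs ht x).deriv
  have hinner : Continuous (fun x : EuclideanSpace ℝ (Fin n) => (inner ℝ x y : ℝ)) :=
    continuous_id.inner continuous_const
  have hKfcont : ∀ τ : ℝ, Continuous (fun x : EuclideanSpace ℝ (Fin n) => Kf n s y τ x) := by
    intro τ; unfold Kf
    exact continuous_const.mul
      ((((((continuous_norm.pow 2).add continuous_const).neg.div_const 2).mul
        continuous_const).add (hinner.div_const _)).rexp)
  have hKdcont : Continuous (fun x : EuclideanSpace ℝ (Fin n) => Kd n s y t x) := by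
    unfold Kd
    exact (continuous_const.mul (hKfcont t)).mul
      ((continuous_const.add
        (((continuous_norm.pow 2).add continuous_const).div_const _)).sub
        ((hinner.mul continuous_const).div_const _))
  have hmain := hasDerivAt_integral_of_dominated_loc_of_deriv_le (μ := volume)
      (F := fun τ x => Kf n s y τ x) (F' := fun τ x => Kd n s y τ x) (x₀ := t)
      (bound := Kbound n s t y) (Metric.ball_mem_nhds t (half_pos ht))
      (Filter.Eventually.of_forall fun τ => (hKfcont τ).aestronglyMeasurable)
      (Kf_integrable n s y hs ht)
      hKdcont.aestronglyMeasurable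
      (Filter.Eventually.of_forall fun x τ hτ => Kd_le_bound n s t y hs ht x hτ)
      (Kbound_integrable n s t y hs ht)
      (Filter.Eventually.of_forall fun x τ hτ => by
        have hτpos : 0 < τ := by
          rw [Metric.mem_ball, Real.dist_eq, abs_sub_lt_iff] at hτ
          linarith [hτ.2]
        exact Kf_hasDerivAt n s y hs hτpos x)
  obtain ⟨-, hD⟩ := hmain
  have hev : (fun τ : ℝ => (2 * π / Real.cosh (τ ^ 2 / (2 * s))) ^ ((n : ℝ) / 2) *
      Real.exp (-Real.sinh (τ ^ 2 / (2 * s)) * ‖y‖ ^ 2 / (2 * Real.cosh (τ ^ 2 / (2 * s)))))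
      =ᶠ[nhds t] (fun τ => ∫ x, Kf n s y τ x) := by
    filter_upwards [eventually_gt_nhds ht] with τ hτ
    exact (Kf_integral n s y hs hτ).symm
  have hD2 := hD.congr_of_eventuallyEq hev
  have hD3 := F_hasDerivAt n s (‖y‖ ^ 2) (by positivity) hs ht
  have huniq := hD2.unique hD3
  have hieq : (∫ x, deriv (fun τ : ℝ => hermiteHeatKernel n (τ ^ 2 / (4 * s)) x y) t) =
      ∫ x, Kd n s y t x := by
    apply integral_congr_ae
    filter_upwards with x
    exact hderiv x
  rw [hieq, huniq]
  refine ⟨rfl, ?_⟩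
  have hnonneg : 0 ≤ (t / (2 * s)) *
      Real.exp (-Real.sinh (t ^ 2 / (2 * s)) * ‖y‖ ^ 2 / (2 * Real.cosh (t ^ 2 / (2 * s)))) *
      (2 * π / Real.cosh (t ^ 2 / (2 * s))) ^ ((n : ℝ) / 2) *
      (‖y‖ ^ 2 / Real.cosh (t ^ 2 / (2 * s)) ^ 2 +
        n * Real.sinh (t ^ 2 / (2 * s)) / Real.cosh (t ^ 2 / (2 * s))) := by
    apply mul_nonneg
    apply mul_nonneg
    apply mul_nonneg
    · positivity
    · positivity
    · positivity
    · positivity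
  nlinarith [hnonneg]
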